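/- Let A ∈ ℝ^{2n×2n} be symmetric positive definite, partitioned into n×n blocks as A = [[A₁₁, A₁₂],[A₁₂ᵀ, A₂₂]], let A₁₁ = L₁₁L₁₁ᵀ be the Cholesky factorization of A₁₁, and let L₁ := [[L₁₁, 0],[(L₁₁⁻¹A₁₂)ᵀ, (L₁₁ᵀ)⁻¹]]. Then A + ΔA = L₁L₁ᵀ where ΔA = [[0, 0],[0, A₁₁⁻¹ − S]] with S := A₂₂ − A₁₂ᵀ A₁₁⁻¹ A₁₂, and moreover L₁L₁ᵀ = [[I, 0],[Wᵀ, I]] · [[A₁₁, 0],[0, A₁₁⁻¹]] · [[I, W],[0, I]] and A = [[I, 0],[Wᵀ, I]] · [[A₁₁, 0],[0, S]] · [[I, W],[0, I]], where W := A₁₁⁻¹ A₁₂. -/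

import Mathlib

open Matrix

/-- Spectral norm (ℓ² operator norm) of a real square matrix. -/
noncomputable def specNorm {m : Type*} [Fintype m] [DecidableEq m] (M : Matrix m m ℝ) : ℝ :=
  ‖LinearMap.toContinuousLinearMap (Matrix.toEuclideanLin M)‖

/-- Frobenius norm of a real square matrix. -/
noncomputable def frobNorm {m : Type*} [Fintype m] (M : Matrix m m ℝ) : ℝ :=
  Real.sqrt (∑ i, ∑ j, (M i j) ^ 2)

/-- Spectral condition number κ₂(M) = ‖M⁻¹‖₂ ‖M‖₂. -/
noncomputable def cond2 {m : Type*} [Fintype m] [DecidableEq m] (M : Matrix m m ℝ) : ℝ :=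
  specNorm M⁻¹ * specNorm M

/-- Spectral radius of a real square matrix (via its complex spectrum). -/
noncomputable def specRad {m : Type*} [Fintype m] [DecidableEq m] (M : Matrix m m ℝ) : ℝ :=
  (spectralRadius ℂ (M.map (Complex.ofReal ·))).toReal

/-- Lower triangular predicate. -/
def LowerTri {k : ℕ} (M : Matrix (Fin k) (Fin k) ℝ) : Prop := ∀ i j, i < j → M i j = 0
/-- Upper triangular predicate. -/
def UpperTri {k : ℕ} (M : Matrix (Fin k) (Fin k) ℝ) : Prop := ∀ i j, j < i → M i j = 0
/-- Positive diagonal entries predicate. -/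
def PosDiag {k : ℕ} (M : Matrix (Fin k) (Fin k) ℝ) : Prop := ∀ i, 0 < M i i

/-- The standard symplectic matrix J = [[0, I], [-I, 0]]. -/
noncomputable def Jmat (n : ℕ) : Matrix (Fin n ⊕ Fin n) (Fin n ⊕ Fin n) ℝ :=
  fromBlocks 0 1 (-1) 0

/-- M is symplectic iff MᵀJM = J. -/
def IsSymplectic {n : ℕ} (M : Matrix (Fin n ⊕ Fin n) (Fin n ⊕ Fin n) ℝ) : Prop :=
  Mᵀ * Jmat n * M = Jmat n

/-- Ω(M) = MᵀJM − J, the loss of symplecticity. -/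
noncomputable def Omega {n : ℕ} (M : Matrix (Fin n ⊕ Fin n) (Fin n ⊕ Fin n) ℝ) :
    Matrix (Fin n ⊕ Fin n) (Fin n ⊕ Fin n) ℝ :=
  Mᵀ * Jmat n * M - Jmat n

/-- A + ΔA = L₁L₁ᵀ with ΔA = [[0,0],[0,A₁₁⁻¹−S]], and the block LDLᵀ
decompositions of L₁L₁ᵀ and of A. -/
theorem stmt5 {n : ℕ} (hn : 1 ≤ n)
    (A11 A12 A22 L11 : Matrix (Fin n) (Fin n) ℝ)
    (A : Matrix (Fin n ⊕ Fin n) (Fin n ⊕ Fin n) ℝ)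
    (hA : A = fromBlocks A11 A12 A12ᵀ A22)
    (hpd : A.PosDef)
    (hlow : LowerTri L11) (hdiag : PosDiag L11) (hchol : A11 = L11 * L11ᵀ) :
    A + fromBlocks 0 0 0 (A11⁻¹ - (A22 - A12ᵀ * A11⁻¹ * A12)) =
        (fromBlocks L11 0 (L11⁻¹ * A12)ᵀ L11ᵀ⁻¹) *
          (fromBlocks L11 0 (L11⁻¹ * A12)ᵀ L11ᵀ⁻¹)ᵀ ∧
      (fromBlocks L11 0 (L11⁻¹ * A12)ᵀ L11ᵀ⁻¹) *
          (fromBlocks L11 0 (L11⁻¹ * A12)ᵀ L11ᵀ⁻¹)ᵀ =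
        fromBlocks 1 0 (A11⁻¹ * A12)ᵀ 1 * fromBlocks A11 0 0 A11⁻¹ *
          fromBlocks 1 (A11⁻¹ * A12) 0 1 ∧
      A = fromBlocks 1 0 (A11⁻¹ * A12)ᵀ 1 *
            fromBlocks A11 0 0 (A22 - A12ᵀ * A11⁻¹ * A12) *
          fromBlocks 1 (A11⁻¹ * A12) 0 1 := by
  subst hA
  have hA11 : A11.PosDef := by
    rw [posDef_iff_dotProduct_mulVec]
    constructor
    · rw [hchol]; simp [Matrix.IsHermitian, Matrix.transpose_mul]
    · intro x hx
      have hy : (Sum.elim x 0 : Fin n ⊕ Fin n → ℝ) ≠ 0 := by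
        intro h; apply hx; funext i; simpa using congrFun h (Sum.inl i)
      have := hpd.dotProduct_mulVec_pos hy
      simpa [fromBlocks_mulVec, sumElim_dotProduct_sumElim] using this
  have hAu : IsUnit A11.det := isUnit_iff_ne_zero.2 hA11.det_pos.ne'
  have hLu : IsUnit L11.det := by
    have : A11.det = L11.det * L11.det := by rw [hchol, det_mul, det_transpose]
    rcases hAu with h
    refine isUnit_iff_ne_zero.2 fun h0 => ?_
    apply hA11.det_pos.ne'
    rw [this, h0, mul_zero]
  have hLtu : IsUnit L11ᵀ.det := by rwa [det_transpose]
  have hsym : A11ᵀ = A11 := by rw [hchol]; simp [Matrix.transpose_mul]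
  have hAinv : A11⁻¹ = L11ᵀ⁻¹ * L11⁻¹ := by rw [hchol, Matrix.mul_inv_rev]
  have hTinv : (L11ᵀ⁻¹)ᵀ = L11⁻¹ := by
    rw [← Matrix.transpose_nonsing_inv, transpose_transpose]
  have e2 : L11 * (L11⁻¹ * A12) = A12 := by
    rw [← mul_assoc, Matrix.mul_nonsing_inv _ hLu, one_mul]
  have e3 : (L11⁻¹ * A12)ᵀ * L11ᵀ = A12ᵀ := by
    rw [← transpose_mul, e2]
  have e4 : (L11⁻¹ * A12)ᵀ * (L11⁻¹ * A12) = A12ᵀ * A11⁻¹ * A12 := by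
    rw [transpose_mul, Matrix.transpose_nonsing_inv, hAinv]
    noncomm_ring
  have eW : A11 * (A11⁻¹ * A12) = A12 := by
    rw [← mul_assoc, Matrix.mul_nonsing_inv _ hAu, one_mul]
  have eWt : (A11⁻¹ * A12)ᵀ * A11 = A12ᵀ := by
    rw [transpose_mul, Matrix.transpose_nonsing_inv, hsym, mul_assoc,
      Matrix.nonsing_inv_mul _ hAu, mul_one]
  have eWtW : (A11⁻¹ * A12)ᵀ * A11 * (A11⁻¹ * A12) = A12ᵀ * A11⁻¹ * A12 := by
    rw [eWt, mul_assoc, ← mul_assoc]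
  have simps := 0
  refine ⟨?_, ?_, ?_⟩
  · rw [fromBlocks_transpose, fromBlocks_multiply, fromBlocks_add, hTinv]
    refine fromBlocks_inj.2 ⟨?_, ?_, ?_, ?_⟩ <;>
      simp only [transpose_transpose, transpose_zero, Matrix.mul_zero, Matrix.zero_mul,
        add_zero, zero_add, Matrix.one_mul, Matrix.mul_one]
    · exact hchol
    · exact e2.symm
    · exact e3.symm
    · rw [e4, ← hAinv]; abel
  · rw [fromBlocks_transpose, fromBlocks_multiply, fromBlocks_multiply,
      fromBlocks_multiply, hTinv]
    refine fromBlocks_inj.2 ⟨?_, ?_, ?_, ?_⟩ <;>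
      simp only [transpose_transpose, transpose_zero, Matrix.mul_zero, Matrix.zero_mul,
        add_zero, zero_add, Matrix.one_mul, Matrix.mul_one]
    · exact hchol.symm
    · rw [e2, eW]
    · rw [e3, eWt]
    · rw [e4, eWtW, ← hAinv]
  · rw [fromBlocks_multiply, fromBlocks_multiply]
    refine fromBlocks_inj.2 ⟨?_, ?_, ?_, ?_⟩ <;>
      simp only [transpose_transpose, transpose_zero, Matrix.mul_zero, Matrix.zero_mul,
        add_zero, zero_add, Matrix.one_mul, Matrix.mul_one]
    · exact eW.symm
    · exact eWt.symm
    · rw [eWtW]; abel
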